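/- Let D be a division ring, φ a ring automorphism of D, and K = {a ∈ D : φ(a) = a} the fixed division subring. Suppose the center k of K is contained in the center of D. If φ has infinite order, then the center of the skew Laurent series division ring D((λ, φ)) is k. -/

import Mathlib

private lemma fix_zpow_aux {D : Type*} [DivisionRing D] (φ : D ≃+* D) {a : D} (h : φ a = a) :
    ∀ n : ℤ, (φ ^ n) a = a := by
  have hs : φ.symm a = a := by conv_lhs => rw [← h]; simp
  intro n
  induction n using Int.induction_on with
  | zero => rfl
  | succ n ih =>
      rw [zpow_add_one]
      show (φ ^ (n : ℤ)) (φ a) = a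
      rw [h, ih]
  | pred n ih =>
      rw [zpow_sub_one]
      show (φ ^ (-(n : ℤ))) (φ.symm a) = a
      rw [hs, ih]

theorem center_skewLaurentSeries_of_infinite_order
    (D : Type*) [DivisionRing D] (φ : D ≃+* D)
    (L : Type*) [DivisionRing L] (e : L ≃+ HahnSeries ℤ D)
    (hmul : ∀ x y : L, ∀ n : ℤ,
      (e (x * y)).coeff n = ∑ᶠ i : ℤ, (e x).coeff i * (φ ^ i) ((e y).coeff (n - i)))
    (hone : e 1 = HahnSeries.C (1 : D))
    (hkF : ∀ a : D, φ a = a → (∀ b : D, φ b = b → a * b = b * a) →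
      a ∈ Subring.center D)
    (hord : ¬ IsOfFinOrder φ) :
    ∀ x : L, x ∈ Subring.center L ↔
      ∃ a : D, φ a = a ∧ (∀ b : D, φ b = b → a * b = b * a) ∧ e x = HahnSeries.C a := by
  intro x
  constructor
  · intro hx
    rw [Subring.mem_center_iff] at hx
    set c : ℤ → D := fun i => (e x).coeff i with hc
    -- key relation: ∀ j m d, c j * (φ^j) d = d * (φ^m) (c j)
    have key : ∀ (j m : ℤ) (d : D), c j * (φ ^ j) d = d * (φ ^ m) (c j) := by
      intro j m d
      set y : L := e.symm (HahnSeries.single m d) with hy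
      have hey : e y = HahnSeries.single m d := e.apply_symm_apply _
      have h1 : (e (x * y)).coeff (m + j) = c j * (φ ^ j) d := by
        rw [hmul x y (m + j)]
        rw [finsum_eq_single _ j (fun i hi => ?_)]
        · rw [hey]
          have : m + j - j = m := by ring
          rw [this, HahnSeries.coeff_single_same]
        · rw [hey, HahnSeries.coeff_single_of_ne (by omega), map_zero, mul_zero]
      have h2 : (e (y * x)).coeff (m + j) = d * (φ ^ m) (c j) := by
        rw [hmul y x (m + j)]
        rw [finsum_eq_single _ m (fun i hi => ?_)]
        · rw [hey, HahnSeries.coeff_single_same]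
          have : m + j - m = j := by ring
          rw [this]
        · rw [hey, HahnSeries.coeff_single_of_ne hi, zero_mul]
      rw [← h1, ← h2, hx y]
    have hfix : ∀ j : ℤ, φ (c j) = c j := by
      intro j
      simpa [zpow_one] using (key j 1 1).symm
    have rel : ∀ (j : ℤ) (d : D), c j * (φ ^ j) d = d * c j := by
      intro j d
      simpa using key j 0 d
    have hzero : ∀ j : ℤ, j ≠ 0 → c j = 0 := by
      intro j hj
      by_contra hcj
      have hcen : c j ∈ Subring.center D := by
        refine hkF (c j) (hfix j) (fun b hb => ?_)
        have := rel j b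
        rwa [fix_zpow_aux φ hb] at this
      rw [Subring.mem_center_iff] at hcen
      have hid : ∀ d : D, (φ ^ j) d = d := by
        intro d
        have h1 : c j * (φ ^ j) d = c j * d := by
          rw [rel j d, hcen d]
        exact mul_left_cancel₀ hcj h1
      have hpow : φ ^ j = 1 := by
        ext d; exact hid d
      apply hord
      rw [isOfFinOrder_iff_pow_eq_one]
      refine ⟨j.natAbs, by omega, ?_⟩
      have : φ ^ (j.natAbs : ℤ) = 1 := by
        rcases Int.natAbs_eq j with h | h
        · rw [← h, hpow]
        · rw [show (j.natAbs : ℤ) = -j by omega, zpow_neg, hpow, inv_one]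
      rwa [zpow_natCast] at this
    refine ⟨c 0, hfix 0, fun b _ => by simpa using rel 0 b, ?_⟩
    ext n
    rw [HahnSeries.C_apply, HahnSeries.coeff_single]
    split
    · next h => rw [h]
    · next h => exact hzero n h
  · intro ⟨a, hfa, hcomm, hexa⟩
    have haC : a ∈ Subring.center D := hkF a hfa hcomm
    rw [Subring.mem_center_iff] at haC ⊢
    intro y
    apply e.injective
    ext n
    have h1 : (e (y * x)).coeff n = (e y).coeff n * a := by
      rw [hmul y x n]
      rw [finsum_eq_single _ n (fun i hi => ?_)]
      · rw [hexa, HahnSeries.C_apply, sub_self, HahnSeries.coeff_single_same,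
          fix_zpow_aux φ hfa]
      · rw [hexa, HahnSeries.C_apply, HahnSeries.coeff_single_of_ne (by omega), map_zero,
          mul_zero]
    have h2 : (e (x * y)).coeff n = a * (e y).coeff n := by
      rw [hmul x y n]
      rw [finsum_eq_single _ 0 (fun i hi => ?_)]
      · rw [hexa, HahnSeries.C_apply, HahnSeries.coeff_single_same, sub_zero]
        rfl
      · rw [hexa, HahnSeries.C_apply, HahnSeries.coeff_single_of_ne hi, zero_mul]
    rw [h1, h2, haC]
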